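/- Let d = m + n and write z = (s,v) ∈ ℝ^m × ℝ^n. Let f, f' : ℝ^d → ℝ^d be C¹ diffeomorphisms; let g, g' : ℝ^m → ℝ^k be bounded continuous functions such that g applied to the first m coordinates of f⁻¹(x) equals g' applied to the first m coordinates of f'⁻¹(x), for every x ∈ ℝ^d (semantic identification on the training domain); let p_μ : ℝ^d → [0,∞) be an integrable probability density whose Fourier transform is nonzero almost everywhere; and let p̃, p̃' : ℝ^d → [0,∞) be continuous integrable densities (the test-domain priors). If ∫ p̃(z)·p_μ(x − f(z)) dz = ∫ p̃'(z)·p_μ(x − f'(z)) dz for every x ∈ ℝ^d, then: (a) p̃(f⁻¹(x))·|det Df⁻¹(x)| = p̃'(f'⁻¹(x))·|det Df'⁻¹(x)| for every x ∈ ℝ^d (so p̃' is the pushforward of p̃ under Φ := f'⁻¹ ∘ f); and (b) ∫ g(s)·p̃(s,v)·p_μ(x − f(s,v)) ds dv = ∫ g'(s)·p̃'(s,v)·p_μ(x − f'(s,v)) ds dv for every x ∈ ℝ^d; consequently the two models' predictors Ẽ[y|x] (the ratios of the integrals in (b) to the common marginal density) coincide at every x where the marginal density is positive. (This is the paper's domain-adaptation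 theorem: fitting the test-domain input distribution with shared causal mechanisms recovers the test-domain prior and yields the exact test-domain predictor.) -/

import Mathlib

open MeasureTheory

/-- Fourier transform of a real function on `ℝ^m × ℝ^n` (with the inner product given by
the sum of the coordinate inner products). -/
noncomputable def fourierProd {m n : ℕ}
    (f : EuclideanSpace ℝ (Fin m) × EuclideanSpace ℝ (Fin n) → ℝ)
    (ξ : EuclideanSpace ℝ (Fin m) × EuclideanSpace ℝ (Fin n)) : ℂ :=
  ∫ x, Complex.exp (-(2 * Real.pi * Complex.I *
      (((inner ℝ x.1 ξ.1 : ℝ) + (inner ℝ x.2 ξ.2 : ℝ) : ℝ) : ℂ))) * (f x : ℂ)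

/-! ### Auxiliary infrastructure -/

/-- Concatenation measurable equiv between `ℝ^m × ℝ^n` and `ℝ^(m+n)`. -/
noncomputable def splitEquiv (m n : ℕ) :
    (EuclideanSpace ℝ (Fin m) × EuclideanSpace ℝ (Fin n)) ≃ᵐ EuclideanSpace ℝ (Fin (m + n)) :=
  (((MeasurableEquiv.toLp 2 (Fin m → ℝ)).symm).prodCongr
      ((MeasurableEquiv.toLp 2 (Fin n → ℝ)).symm)).trans <|
    ((MeasurableEquiv.sumPiEquivProdPi (fun _ : Fin m ⊕ Fin n => ℝ)).symm.trans
      ((MeasurableEquiv.piCongrLeft (fun _ => ℝ) finSumFinEquiv).trans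
        ((MeasurableEquiv.toLp 2 (Fin (m + n) → ℝ)).symm).symm))

lemma splitEquiv_measurePreserving (m n : ℕ) :
    MeasurePreserving (splitEquiv m n) volume volume := by
  have h1 : MeasurePreserving
      (⇑(((MeasurableEquiv.toLp 2 (Fin m → ℝ)).symm).prodCongr
        ((MeasurableEquiv.toLp 2 (Fin n → ℝ)).symm))) volume volume := by
    have := ((EuclideanSpace.volume_preserving_symm_measurableEquiv_toLp (Fin m)).prod
      (EuclideanSpace.volume_preserving_symm_measurableEquiv_toLp (Fin n)))
    exact this
  have h2 := (((EuclideanSpace.volume_preserving_symm_measurableEquiv_toLp (Fin (m+n))).symm).comp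
      ((volume_measurePreserving_piCongrLeft (fun _ => ℝ) finSumFinEquiv).comp
        ((volume_measurePreserving_sumPiEquivProdPi_symm (fun _ : Fin m ⊕ Fin n => ℝ)).comp
          h1)))
  convert h2 using 2
  all_goals rfl

lemma splitEquiv_apply {m n : ℕ} (z : EuclideanSpace ℝ (Fin m) × EuclideanSpace ℝ (Fin n)) :
    splitEquiv m n z = WithLp.toLp 2 (fun i => Fin.addCases (fun i => z.1 i) (fun j => z.2 j) i) := by
  apply PiLp.ext; intro i
  show (MeasurableEquiv.piCongrLeft (fun _ => ℝ) finSumFinEquiv)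
      ((MeasurableEquiv.sumPiEquivProdPi (fun _ : Fin m ⊕ Fin n => ℝ)).symm (z.1, z.2)) i =
    Fin.addCases (fun i => z.1 i) (fun j => z.2 j) i
  induction i using Fin.addCases with
  | left i =>
      rw [Fin.addCases_left, ← finSumFinEquiv_apply_left (n := n) i,
        MeasurableEquiv.piCongrLeft_apply_apply]
      simp [MeasurableEquiv.coe_sumPiEquivProdPi_symm]
  | right j =>
      rw [Fin.addCases_right, ← finSumFinEquiv_apply_right (m := m) j,
        MeasurableEquiv.piCongrLeft_apply_apply]
      simp [MeasurableEquiv.coe_sumPiEquivProdPi_symm]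

lemma splitEquiv_symm_apply {m n : ℕ} (v : EuclideanSpace ℝ (Fin (m + n))) :
    (splitEquiv m n).symm v =
      ((WithLp.toLp 2 (fun i => v (Fin.castAdd n i)) : EuclideanSpace ℝ (Fin m)),
       (WithLp.toLp 2 (fun j => v (Fin.natAdd m j)) : EuclideanSpace ℝ (Fin n))) := by
  apply (splitEquiv m n).injective
  rw [MeasurableEquiv.apply_symm_apply, splitEquiv_apply]
  apply PiLp.ext; intro i
  induction i using Fin.addCases with
  | left i => simp
  | right j => simp

lemma splitEquiv_symm_sub {m n : ℕ} (a b : EuclideanSpace ℝ (Fin (m + n))) :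
    (splitEquiv m n).symm (a - b) = (splitEquiv m n).symm a - (splitEquiv m n).symm b := by
  simp only [splitEquiv_symm_apply]
  rfl

lemma splitEquiv_symm_continuous (m n : ℕ) : Continuous ((splitEquiv m n).symm) := by
  have : ⇑(splitEquiv m n).symm = fun v : EuclideanSpace ℝ (Fin (m+n)) =>
      ((WithLp.toLp 2 (fun i => v (Fin.castAdd n i)) : EuclideanSpace ℝ (Fin m)),
       (WithLp.toLp 2 (fun j => v (Fin.natAdd m j)) : EuclideanSpace ℝ (Fin n))) := funext splitEquiv_symm_apply
  rw [this]
  exact Continuous.prodMk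
    ((PiLp.continuous_toLp 2 _).comp (continuous_pi fun i => PiLp.continuous_apply 2 _ _))
    ((PiLp.continuous_toLp 2 _).comp (continuous_pi fun j => PiLp.continuous_apply 2 _ _))

lemma splitEquiv_inner {m n : ℕ} (x ξ : EuclideanSpace ℝ (Fin m) × EuclideanSpace ℝ (Fin n)) :
    (inner ℝ (splitEquiv m n x) (splitEquiv m n ξ) : ℝ) =
      (inner ℝ x.1 ξ.1 : ℝ) + (inner ℝ x.2 ξ.2 : ℝ) := by
  simp only [splitEquiv_apply, PiLp.inner_apply, PiLp.toLp_apply, RCLike.inner_apply, conj_trivial]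
  rw [Fin.sum_univ_add]
  congr 1 <;> · apply Finset.sum_congr rfl; intro i _; simp

open FourierTransform Real in
/-- Key Fourier-analytic fact: a continuous integrable function whose convolution with an
integrable function with a.e.-nonvanishing Fourier transform vanishes, vanishes identically. -/
lemma fourier_key {N : ℕ} {H P : EuclideanSpace ℝ (Fin N) → ℂ}
    (hHc : Continuous H) (hH : Integrable H) (hP : Integrable P)
    (hPft : ∀ᵐ ξ, 𝓕 P ξ ≠ 0)
    (hconv : ∀ᵐ v, (∫ w, H w * P (v - w)) = 0) : ∀ v, H v = 0 := by
  have h1 : ∀ ξ : EuclideanSpace ℝ (Fin N), 𝓕 H ξ * 𝓕 P ξ = 0 := by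
    intro ξ
    set c : EuclideanSpace ℝ (Fin N) → ℂ :=
      fun v => Complex.exp ((↑(-2 * π * (inner ℝ v ξ : ℝ)) * Complex.I)) with hc
    have hcmul : ∀ v w : EuclideanSpace ℝ (Fin N), c w * c (v - w) = c v := by
      intro v w
      rw [hc, ← Complex.exp_add]
      congr 1
      have : (inner ℝ w ξ : ℝ) + (inner ℝ (v - w) ξ : ℝ) = (inner ℝ v ξ : ℝ) := by
        rw [inner_sub_left]; ring
      push_cast [← this]
      ring
    have hcont : Continuous c := by
      apply Complex.continuous_exp.comp
      exact (Complex.continuous_ofReal.comp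
        (continuous_const.mul (continuous_id.inner continuous_const))).mul continuous_const
    have hcnorm : ∀ v, ‖c v‖ = 1 := fun v => Complex.norm_exp_ofReal_mul_I _
    have hint : Integrable (Function.uncurry fun w v => c v * (H w * P (v - w)))
        (volume.prod volume) := by
      have h0 : Integrable
          (fun p : (EuclideanSpace ℝ (Fin N)) × (EuclideanSpace ℝ (Fin N)) =>
            H p.2 * P (p.1 - p.2)) (volume.prod volume) := by
        have := hH.convolution_integrand (ContinuousLinearMap.mul ℝ ℂ) hP
        simpa only [ContinuousLinearMap.mul_apply'] using this
      have h0' : Integrable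
          (fun p : (EuclideanSpace ℝ (Fin N)) × (EuclideanSpace ℝ (Fin N)) =>
            H p.1 * P (p.2 - p.1)) (volume.prod volume) := h0.swap
      apply h0'.bdd_mul (c := 1)
      · exact (hcont.comp continuous_snd).aestronglyMeasurable
      · exact Filter.Eventually.of_forall fun p => le_of_eq (hcnorm _)
    calc 𝓕 H ξ * 𝓕 P ξ
        = (∫ w, c w * H w) * (∫ u, c u * P u) := by
          rw [Real.fourier_eq', Real.fourier_eq']
          simp only [smul_eq_mul]
          rfl
      _ = ∫ w, (c w * H w) * ∫ u, c u * P u := (integral_mul_const _ _).symm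
      _ = ∫ w, ∫ v, c v * (H w * P (v - w)) := by
          apply integral_congr_ae; filter_upwards with w
          rw [← integral_sub_right_eq_self (fun u => c u * P u) w, ← integral_const_mul]
          apply integral_congr_ae; filter_upwards with v
          rw [← hcmul v w]; ring
      _ = ∫ v, ∫ w, c v * (H w * P (v - w)) := integral_integral_swap hint
      _ = ∫ v, c v * ∫ w, H w * P (v - w) := by
          apply integral_congr_ae; filter_upwards with v
          rw [integral_const_mul]
      _ = 0 := by
          rw [← integral_zero (α := EuclideanSpace ℝ (Fin N)) (G := ℂ)]
          apply integral_congr_ae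
          filter_upwards [hconv] with v hv
          rw [hv, mul_zero]
  have hFHc : Continuous (𝓕 H) :=
    VectorFourier.fourierIntegral_continuous Real.continuous_fourierChar
      (by exact continuous_inner) hH
  have hFH0 : 𝓕 H = fun _ => (0 : ℂ) := by
    rw [← Continuous.ae_eq_iff_eq (μ := volume) hFHc continuous_const]
    filter_upwards [hPft] with ξ hξ
    have := h1 ξ
    simpa [hξ] using (mul_eq_zero.mp this)
  have hinv := hHc.fourierInv_fourier_eq hH (by rw [hFH0]; exact integrable_zero _ _ _)
  intro v
  rw [← hinv, hFH0]
  simp [Real.fourierInv_eq]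

/-- Deconvolution: transfer of `fourier_key` to the product space `ℝ^m × ℝ^n`. -/
lemma deconv {m n : ℕ} {h pμ : EuclideanSpace ℝ (Fin m) × EuclideanSpace ℝ (Fin n) → ℝ}
    (hc : Continuous h) (hint : Integrable h) (hpμ : Integrable pμ)
    (hft : ∀ᵐ ξ : EuclideanSpace ℝ (Fin m) × EuclideanSpace ℝ (Fin n) ∂volume,
      fourierProd pμ ξ ≠ 0)
    (hconv : ∀ᵐ x : EuclideanSpace ℝ (Fin m) × EuclideanSpace ℝ (Fin n) ∂volume,
      (∫ z, h z * pμ (x - z)) = 0) :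
    ∀ z, h z = 0 := by
  have mp := splitEquiv_measurePreserving m n
  have mps : MeasurePreserving (⇑(splitEquiv m n).symm) volume volume := mp.symm (splitEquiv m n)
  set H : EuclideanSpace ℝ (Fin (m + n)) → ℂ := fun v => (h ((splitEquiv m n).symm v) : ℂ) with hH
  set P : EuclideanSpace ℝ (Fin (m + n)) → ℂ := fun v => (pμ ((splitEquiv m n).symm v) : ℂ) with hP
  have hHc : Continuous H :=
    Complex.continuous_ofReal.comp (hc.comp (splitEquiv_symm_continuous m n))
  have hHint : Integrable H := by
    exact ((mps.integrable_comp_emb (splitEquiv m n).symm.measurableEmbedding).mpr hint).ofReal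
  have hPint : Integrable P := by
    exact ((mps.integrable_comp_emb (splitEquiv m n).symm.measurableEmbedding).mpr hpμ).ofReal
  have hFP : ∀ ξ, FourierTransform.fourier P (splitEquiv m n ξ) = fourierProd pμ ξ := by
    intro ξ
    rw [Real.fourier_eq']
    rw [← mp.integral_comp (splitEquiv m n).measurableEmbedding
      (fun v => Complex.exp ((↑(-2 * Real.pi * (inner ℝ v (splitEquiv m n ξ) : ℝ)) * Complex.I)) • P v)]
    apply integral_congr_ae; filter_upwards with x
    rw [smul_eq_mul]
    congr 1
    · rw [splitEquiv_inner]
      push_cast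
      ring_nf
    · rw [hP]; simp only [MeasurableEquiv.symm_apply_apply]
  have hft' : ∀ᵐ v : EuclideanSpace ℝ (Fin (m + n)) ∂volume, FourierTransform.fourier P v ≠ 0 := by
    filter_upwards [mps.quasiMeasurePreserving.ae hft] with v hv
    have := hFP ((splitEquiv m n).symm v)
    rw [MeasurableEquiv.apply_symm_apply] at this
    rw [this]; exact hv
  have hconv' : ∀ᵐ v : EuclideanSpace ℝ (Fin (m + n)) ∂volume,
      (∫ w, H w * P (v - w)) = 0 := by
    filter_upwards [mps.quasiMeasurePreserving.ae hconv] with v hv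
    have h1 : (∫ w, H w * P (v - w)) = ∫ z, H (splitEquiv m n z) * P (v - splitEquiv m n z) :=
      (mp.integral_comp (splitEquiv m n).measurableEmbedding (fun w => H w * P (v - w))).symm
    rw [h1]
    have h3 : ∀ z, H (splitEquiv m n z) * P (v - splitEquiv m n z) =
        ((h z * pμ ((splitEquiv m n).symm v - z) : ℝ) : ℂ) := by
      intro z
      simp only [hH, hP, splitEquiv_symm_sub]
      simp only [MeasurableEquiv.symm_apply_apply]
      push_cast; ring
    rw [integral_congr_ae (Filter.Eventually.of_forall h3)]
    have h2 : (∫ z, ((h z * pμ ((splitEquiv m n).symm v - z) : ℝ) : ℂ)) =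
        (((∫ z, h z * pμ ((splitEquiv m n).symm v - z)) : ℝ) : ℂ) := integral_ofReal
    rw [h2, hv, Complex.ofReal_zero]
  have hkey := fourier_key hHc hHint hPint hft' hconv'
  intro z
  have := hkey (splitEquiv m n z)
  rw [hH] at this
  simp only [MeasurableEquiv.symm_apply_apply] at this
  exact_mod_cast this

instance prodVolumeAddHaar (m n : ℕ) :
    (volume : Measure (EuclideanSpace ℝ (Fin m) × EuclideanSpace ℝ (Fin n))).IsAddHaarMeasure :=
  by rw [Measure.volume_eq_prod]; exact Measure.prod.instIsAddHaarMeasure volume volume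

lemma cov {m n : ℕ} {F : Type*} [NormedAddCommGroup F] [NormedSpace ℝ F]
    {finv : EuclideanSpace ℝ (Fin m) × EuclideanSpace ℝ (Fin n) →
      EuclideanSpace ℝ (Fin m) × EuclideanSpace ℝ (Fin n)}
    (hfinv : ContDiff ℝ 1 finv) (hinj : Function.Injective finv)
    (hsurj : Function.Surjective finv)
    (G : EuclideanSpace ℝ (Fin m) × EuclideanSpace ℝ (Fin n) → F) :
    (∫ z, G z) = ∫ x, |(fderiv ℝ finv x).det| • G (finv x) := by
  have h := integral_image_eq_integral_abs_det_fderiv_smul (μ := volume) MeasurableSet.univ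
    (fun x _ => ((hfinv.differentiable one_ne_zero) x).hasFDerivAt.hasFDerivWithinAt)
    hinj.injOn G
  rw [Set.image_univ, hsurj.range_eq] at h
  simpa using h

lemma cov_int {m n : ℕ} {F : Type*} [NormedAddCommGroup F] [NormedSpace ℝ F]
    {finv : EuclideanSpace ℝ (Fin m) × EuclideanSpace ℝ (Fin n) →
      EuclideanSpace ℝ (Fin m) × EuclideanSpace ℝ (Fin n)}
    (hfinv : ContDiff ℝ 1 finv) (hinj : Function.Injective finv)
    (hsurj : Function.Surjective finv)
    (G : EuclideanSpace ℝ (Fin m) × EuclideanSpace ℝ (Fin n) → F) (hG : Integrable G) :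
    Integrable (fun x => |(fderiv ℝ finv x).det| • G (finv x)) := by
  have h := integrableOn_image_iff_integrableOn_abs_det_fderiv_smul (μ := volume)
    MeasurableSet.univ
    (fun x _ => ((hfinv.differentiable one_ne_zero) x).hasFDerivAt.hasFDerivWithinAt)
    hinj.injOn G
  rw [Set.image_univ, hsurj.range_eq] at h
  rw [integrableOn_univ] at h
  exact integrableOn_univ.mp (h.mp hG)

theorem domain_adaptation
    {m n k : ℕ}
    (f finv f' f'inv :
      EuclideanSpace ℝ (Fin m) × EuclideanSpace ℝ (Fin n) →
        EuclideanSpace ℝ (Fin m) × EuclideanSpace ℝ (Fin n))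
    (hf : ContDiff ℝ 1 f) (hfinv : ContDiff ℝ 1 finv)
    (hfl : Function.LeftInverse finv f) (hfr : Function.RightInverse finv f)
    (hf' : ContDiff ℝ 1 f') (hf'inv : ContDiff ℝ 1 f'inv)
    (hf'l : Function.LeftInverse f'inv f') (hf'r : Function.RightInverse f'inv f')
    (g g' : EuclideanSpace ℝ (Fin m) → EuclideanSpace ℝ (Fin k))
    (hgc : Continuous g) (hgb : ∃ C, ∀ s, ‖g s‖ ≤ C)
    (hg'c : Continuous g') (hg'b : ∃ C, ∀ s, ‖g' s‖ ≤ C)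
    (hsem : ∀ x : EuclideanSpace ℝ (Fin m) × EuclideanSpace ℝ (Fin n),
      g (finv x).1 = g' (f'inv x).1)
    (pμ : EuclideanSpace ℝ (Fin m) × EuclideanSpace ℝ (Fin n) → ℝ)
    (hpμint : Integrable pμ) (hpμ0 : ∀ w, 0 ≤ pμ w) (hpμ1 : (∫ w, pμ w) = 1)
    (hft : ∀ᵐ ξ : EuclideanSpace ℝ (Fin m) × EuclideanSpace ℝ (Fin n) ∂volume,
      fourierProd pμ ξ ≠ 0)
    (pt pt' : EuclideanSpace ℝ (Fin m) × EuclideanSpace ℝ (Fin n) → ℝ)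
    (hptc : Continuous pt) (hpt0 : ∀ z, 0 ≤ pt z) (hptint : Integrable pt)
    (hpt'c : Continuous pt') (hpt'0 : ∀ z, 0 ≤ pt' z) (hpt'int : Integrable pt')
    (hfit : ∀ x, (∫ z, pt z * pμ (x - f z)) = ∫ z, pt' z * pμ (x - f' z)) :
    (∀ x, pt (finv x) * |(fderiv ℝ finv x).det| =
      pt' (f'inv x) * |(fderiv ℝ f'inv x).det|) ∧
    (∀ x, (∫ z, (pt z * pμ (x - f z)) • g z.1) =
      ∫ z, (pt' z * pμ (x - f' z)) • g' z.1) ∧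
    (∀ x, 0 < (∫ z, pt z * pμ (x - f z)) →
      (∫ z, pt z * pμ (x - f z))⁻¹ • (∫ z, (pt z * pμ (x - f z)) • g z.1) =
        (∫ z, pt' z * pμ (x - f' z))⁻¹ •
          (∫ z, (pt' z * pμ (x - f' z)) • g' z.1)) := by
  have hfinv_inj : Function.Injective finv := Function.LeftInverse.injective hfr
  have hfinv_surj : Function.Surjective finv := Function.LeftInverse.surjective hfl
  have hf'inv_inj : Function.Injective f'inv := Function.LeftInverse.injective hf'r
  have hf'inv_surj : Function.Surjective f'inv := Function.LeftInverse.surjective hf'l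
  set q : EuclideanSpace ℝ (Fin m) × EuclideanSpace ℝ (Fin n) → ℝ :=
    fun u => pt (finv u) * |(fderiv ℝ finv u).det| with hq
  set q' : EuclideanSpace ℝ (Fin m) × EuclideanSpace ℝ (Fin n) → ℝ :=
    fun u => pt' (f'inv u) * |(fderiv ℝ f'inv u).det| with hq'
  have hdetc : Continuous fun u => |(fderiv ℝ finv u).det| :=
    (ContinuousLinearMap.continuous_det.comp (hfinv.continuous_fderiv one_ne_zero)).abs
  have hdetc' : Continuous fun u => |(fderiv ℝ f'inv u).det| :=
    (ContinuousLinearMap.continuous_det.comp (hf'inv.continuous_fderiv one_ne_zero)).abs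
  have hqc : Continuous q := (hptc.comp hfinv.continuous).mul hdetc
  have hq'c : Continuous q' := (hpt'c.comp hf'inv.continuous).mul hdetc'
  have hqint : Integrable q := by
    have h := cov_int hfinv hfinv_inj hfinv_surj pt hptint
    exact h.congr (Filter.Eventually.of_forall fun x => by
      simp only [smul_eq_mul, hq]; ring)
  have hq'int : Integrable q' := by
    have h := cov_int hf'inv hf'inv_inj hf'inv_surj pt' hpt'int
    exact h.congr (Filter.Eventually.of_forall fun x => by
      simp only [smul_eq_mul, hq']; ring)
  have hcov1 : ∀ x, (∫ z, pt z * pμ (x - f z)) = ∫ u, q u * pμ (x - u) := by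
    intro x
    rw [cov hfinv hfinv_inj hfinv_surj (fun z => pt z * pμ (x - f z))]
    apply integral_congr_ae; filter_upwards with u
    rw [hfr u]
    simp only [smul_eq_mul, hq]; ring
  have hcov1' : ∀ x, (∫ z, pt' z * pμ (x - f' z)) = ∫ u, q' u * pμ (x - u) := by
    intro x
    rw [cov hf'inv hf'inv_inj hf'inv_surj (fun z => pt' z * pμ (x - f' z))]
    apply integral_congr_ae; filter_upwards with u
    rw [hf'r u]
    simp only [smul_eq_mul, hq']; ring
  have ha : ∀ u, q u = q' u := by
    have hsub : ∀ u, q u - q' u = 0 := by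
      apply deconv (hqc.sub hq'c) (hqint.sub hq'int) hpμint hft
      filter_upwards [hqint.ae_convolution_exists (L := ContinuousLinearMap.mul ℝ ℝ) hpμint,
        hq'int.ae_convolution_exists (L := ContinuousLinearMap.mul ℝ ℝ) hpμint] with x h2 h3
      have h2' : Integrable fun t => q t * pμ (x - t) := by
        simpa only [ConvolutionExistsAt, ContinuousLinearMap.mul_apply'] using h2
      have h3' : Integrable fun t => q' t * pμ (x - t) := by
        simpa only [ConvolutionExistsAt, ContinuousLinearMap.mul_apply'] using h3
      have hsplit : (∫ z, (q z - q' z) * pμ (x - z)) =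
          (∫ z, q z * pμ (x - z)) - ∫ z, q' z * pμ (x - z) := by
        rw [← integral_sub h2' h3']
        apply integral_congr_ae; filter_upwards with z
        ring
      simp only [Pi.sub_apply]
      rw [hsplit, ← hcov1 x, ← hcov1' x, hfit x, sub_self]
    intro u
    have := hsub u
    linarith
  have hb : ∀ x, (∫ z, (pt z * pμ (x - f z)) • g z.1) =
      ∫ z, (pt' z * pμ (x - f' z)) • g' z.1 := by
    intro x
    rw [cov hfinv hfinv_inj hfinv_surj (fun z => (pt z * pμ (x - f z)) • g z.1),
        cov hf'inv hf'inv_inj hf'inv_surj (fun z => (pt' z * pμ (x - f' z)) • g' z.1)]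
    apply integral_congr_ae; filter_upwards with u
    rw [hfr u, hf'r u, ← hsem u]
    rw [smul_smul, smul_smul]
    congr 1
    have h := ha u
    simp only [hq, hq'] at h
    linear_combination pμ (x - u) * h
  refine ⟨fun x => ha x, hb, fun x hx => ?_⟩
  rw [← hfit x, ← hb x]
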